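/- Let a, b, a', b' be four distinct isotropic rays in ℝ^{2,n+1} with all six pairwise scalar products negative. Parametrize the spacelike geodesics ℓ(t) = (e^t a + e^{-t} b)/√(-2⟨a,b⟩) and ℓ'(s) = (e^s a' + e^{-s} b')/√(-2⟨a',b'⟩). Then the function (t,s) ↦ -⟨ℓ(t), ℓ'(s)⟩ is proper, positive, has a unique critical point, and its global minimum equals m = √(⟨a,a'⟩⟨b,b'⟩/(⟨a,b⟩⟨a',b'⟩)) + √(⟨a,b'⟩⟨b,a'⟩/(⟨a,b⟩⟨a',b'⟩)). -/

import Mathlib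

/-- The signature `(2, n+1)` bilinear form on `ℝ^{n+3}`. -/
noncomputable def bform (n : ℕ) (x y : Fin (n + 3) → ℝ) : ℝ :=
  ∑ i : Fin (n + 3), (if (i : ℕ) < 2 then (1 : ℝ) else -1) * (x i * y i)

/-- The unit speed spacelike geodesic `ℓ(t) = (e^t a + e^{-t} b)/√(-2⟨a,b⟩)` of `Ĥ^{2,n}`
determined by two isotropic rays `a`, `b` with `⟨a,b⟩ < 0`. -/
noncomputable def lgeo (n : ℕ) (a b : Fin (n + 3) → ℝ) (t : ℝ) : Fin (n + 3) → ℝ :=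
  (Real.sqrt (-2 * bform n a b))⁻¹ • (Real.exp t • a + Real.exp (-t) • b)

lemma bform_bilin (n : ℕ) (c d e f : ℝ) (x y z w : Fin (n+3) → ℝ) :
    bform n (c • x + d • y) (e • z + f • w) =
      c*e * bform n x z + c*f * bform n x w + d*e * bform n y z + d*f * bform n y w := by
  simp only [bform, Pi.add_apply, Pi.smul_apply, smul_eq_mul, Finset.mul_sum,
    ← Finset.sum_add_distrib]
  exact Finset.sum_congr rfl fun i _ => by ring

lemma amgm_exp {P Q : ℝ} (hP : 0 ≤ P) (hQ : 0 ≤ Q) (u : ℝ) :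
    2 * Real.sqrt (P * Q) ≤ P * Real.exp u + Q * Real.exp (-u) := by
  have e1 : (0:ℝ) ≤ P * Real.exp u := by positivity
  have e2 : (0:ℝ) ≤ Q * Real.exp (-u) := by positivity
  have h12 : Real.sqrt (P * Real.exp u) * Real.sqrt (Q * Real.exp (-u)) = Real.sqrt (P*Q) := by
    rw [← Real.sqrt_mul e1]
    congr 1
    rw [Real.exp_neg]
    field_simp
  nlinarith [sq_nonneg (Real.sqrt (P*Real.exp u) - Real.sqrt (Q*Real.exp (-u))),
    Real.sq_sqrt e1, Real.sq_sqrt e2]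

lemma exp_half_log {x : ℝ} (hx : 0 < x) : Real.exp (Real.log x / 2) = Real.sqrt x := by
  rw [Real.sqrt_eq_rpow, Real.rpow_def_of_pos hx]
  ring_nf

lemma kk {A D : ℝ} (hA : 0 < A) (hD : 0 < D) :
    A * Real.exp (Real.log (D/A)/2) = Real.sqrt (A*D) := by
  calc A * Real.exp (Real.log (D/A)/2) = A * Real.sqrt (D/A) := by
        rw [exp_half_log (div_pos hD hA)]
    _ = Real.sqrt (A^2) * Real.sqrt (D/A) := by rw [Real.sqrt_sq hA.le]
    _ = Real.sqrt (A^2 * (D/A)) := (Real.sqrt_mul (sq_nonneg A) _).symm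
    _ = Real.sqrt (A*D) := by congr 1; field_simp

lemma kk' {A D : ℝ} (hA : 0 < A) (hD : 0 < D) :
    D * Real.exp (-(Real.log (D/A)/2)) = Real.sqrt (A*D) := by
  have h : -(Real.log (D/A)/2) = Real.log (A/D)/2 := by
    rw [show (A/D) = (D/A)⁻¹ by rw [inv_div], Real.log_inv]; ring
  rw [h, kk hD hA, mul_comm]

set_option maxHeartbeats 1000000 in
lemma core (A B C D N : ℝ) (hA : 0 < A) (hB : 0 < B) (hC : 0 < C) (hD : 0 < D) (hN : 0 < N) :
    Filter.Tendsto (fun p : ℝ × ℝ => N * (Real.exp (p.1+p.2) * A + Real.exp (p.1-p.2) * B +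
        Real.exp (p.2-p.1) * C + Real.exp (-(p.1+p.2)) * D))
      (Filter.cocompact (ℝ × ℝ)) Filter.atTop ∧
    (∀ p : ℝ × ℝ, 0 < N * (Real.exp (p.1+p.2) * A + Real.exp (p.1-p.2) * B +
        Real.exp (p.2-p.1) * C + Real.exp (-(p.1+p.2)) * D)) ∧
    (∃! p : ℝ × ℝ, fderiv ℝ (fun q : ℝ × ℝ => N * (Real.exp (q.1+q.2) * A + Real.exp (q.1-q.2) * B +
        Real.exp (q.2-q.1) * C + Real.exp (-(q.1+q.2)) * D)) p = 0) ∧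
    IsLeast (Set.range (fun p : ℝ × ℝ => N * (Real.exp (p.1+p.2) * A + Real.exp (p.1-p.2) * B +
        Real.exp (p.2-p.1) * C + Real.exp (-(p.1+p.2)) * D)))
      (N * (2 * Real.sqrt (A*D)) + N * (2 * Real.sqrt (B*C))) := by
  set fst : ℝ × ℝ →L[ℝ] ℝ := ContinuousLinearMap.fst ℝ ℝ ℝ with hfst
  set snd : ℝ × ℝ →L[ℝ] ℝ := ContinuousLinearMap.snd ℝ ℝ ℝ with hsnd
  set g : ℝ × ℝ → ℝ := fun p : ℝ × ℝ => N * (Real.exp (p.1+p.2) * A + Real.exp (p.1-p.2) * B +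
        Real.exp (p.2-p.1) * C + Real.exp (-(p.1+p.2)) * D) with hg
  set L : ℝ × ℝ → (ℝ × ℝ →L[ℝ] ℝ) := fun p =>
      (N • (((A • (Real.exp (p.1+p.2) • (fst + snd)) + B • (Real.exp (p.1-p.2) • (fst - snd))) +
        C • (Real.exp (p.2-p.1) • (snd - fst))) + D • (Real.exp (-(p.1+p.2)) • (-(fst + snd))))) with hL
  have hd : ∀ p : ℝ × ℝ, HasFDerivAt g (L p) p := by
    intro p
    have h1 : HasFDerivAt (fun q : ℝ × ℝ => Real.exp (q.1+q.2)) (Real.exp (p.1+p.2) • (fst + snd)) p :=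
      (Real.hasDerivAt_exp (p.1+p.2)).comp_hasFDerivAt (f := fun q : ℝ × ℝ => q.1 + q.2) p (hasFDerivAt_fst.add hasFDerivAt_snd)
    have h2 : HasFDerivAt (fun q : ℝ × ℝ => Real.exp (q.1-q.2)) (Real.exp (p.1-p.2) • (fst - snd)) p :=
      (Real.hasDerivAt_exp (p.1-p.2)).comp_hasFDerivAt (f := fun q : ℝ × ℝ => q.1 - q.2) p (hasFDerivAt_fst.sub hasFDerivAt_snd)
    have h3 : HasFDerivAt (fun q : ℝ × ℝ => Real.exp (q.2-q.1)) (Real.exp (p.2-p.1) • (snd - fst)) p :=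
      (Real.hasDerivAt_exp (p.2-p.1)).comp_hasFDerivAt (f := fun q : ℝ × ℝ => q.2 - q.1) p (hasFDerivAt_snd.sub hasFDerivAt_fst)
    have h4 : HasFDerivAt (fun q : ℝ × ℝ => Real.exp (-(q.1+q.2))) (Real.exp (-(p.1+p.2)) • (-(fst + snd))) p :=
      (Real.hasDerivAt_exp (-(p.1+p.2))).comp_hasFDerivAt (f := fun q : ℝ × ℝ => -(q.1 + q.2)) p (hasFDerivAt_fst.add hasFDerivAt_snd).neg
    exact ((((h1.mul_const A).add (h2.mul_const B)).add (h3.mul_const C)).add (h4.mul_const D)).const_mul N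
  have happ : ∀ p v : ℝ × ℝ, L p v
      = N * (A * (Real.exp (p.1+p.2) * (v.1+v.2)) + B * (Real.exp (p.1-p.2) * (v.1-v.2)) +
          C * (Real.exp (p.2-p.1) * (v.2-v.1)) + D * (Real.exp (-(p.1+p.2)) * (-(v.1+v.2)))) := by
    intro p v
    simp [hL, hfst, hsnd, ContinuousLinearMap.smul_apply, ContinuousLinearMap.add_apply,
      ContinuousLinearMap.sub_apply, ContinuousLinearMap.neg_apply, smul_eq_mul]
    ring
  set u₀ : ℝ := Real.log (D/A) / 2 with hu₀
  set v₀ : ℝ := Real.log (C/B) / 2 with hv₀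
  set p₀ : ℝ × ℝ := ((u₀+v₀)/2, (u₀-v₀)/2) with hp₀
  have hps : p₀.1 + p₀.2 = u₀ := by rw [hp₀]; ring
  have hpd : p₀.1 - p₀.2 = v₀ := by rw [hp₀]; ring
  have hpn : p₀.2 - p₀.1 = -v₀ := by rw [hp₀]; ring
  have kA : A * Real.exp u₀ = Real.sqrt (A*D) := kk hA hD
  have kD : D * Real.exp (-u₀) = Real.sqrt (A*D) := kk' hA hD
  have kB : B * Real.exp v₀ = Real.sqrt (B*C) := kk hB hC
  have kC : C * Real.exp (-v₀) = Real.sqrt (B*C) := kk' hB hC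
  have hNne : N ≠ 0 := ne_of_gt hN
  refine ⟨?_, ?_, ?_, ?_⟩
  · -- proper
    set ε : ℝ := min (min A B) (min C D) with hε
    have hε0 : 0 < ε := by positivity
    have hεA : ε ≤ A := le_trans (min_le_left _ _) (min_le_left _ _)
    have hεB : ε ≤ B := le_trans (min_le_left _ _) (min_le_right _ _)
    have hεC : ε ≤ C := le_trans (min_le_right _ _) (min_le_left _ _)
    have hεD : ε ≤ D := le_trans (min_le_right _ _) (min_le_right _ _)
    have hbase : Filter.Tendsto (fun p : ℝ × ℝ => (N*ε) * Real.exp ‖p‖)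
        (Filter.cocompact (ℝ × ℝ)) Filter.atTop :=
      (Real.tendsto_exp_atTop.comp tendsto_norm_cocompact_atTop).const_mul_atTop (by positivity)
    refine Filter.tendsto_atTop_mono (fun p => ?_) hbase
    obtain ⟨t, s⟩ := p
    have hnorm : ‖((t, s) : ℝ × ℝ)‖ ≤ |t| + |s| := by
      rw [Prod.norm_def]
      simp only [Real.norm_eq_abs]
      exact max_le (le_add_of_nonneg_right (abs_nonneg s)) (le_add_of_nonneg_left (abs_nonneg t))
    have c1 : Real.exp ‖((t, s) : ℝ × ℝ)‖ ≤ Real.exp |t| * Real.exp |s| := by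
      rw [← Real.exp_add]; exact Real.exp_le_exp.mpr hnorm
    have c3 : Real.exp |t| * Real.exp |s| ≤ (Real.exp t + Real.exp (-t)) * (Real.exp s + Real.exp (-s)) :=
      mul_le_mul (Real.exp_abs_le t) (Real.exp_abs_le s) (Real.exp_pos _).le (by positivity)
    have c4 : (Real.exp t + Real.exp (-t)) * (Real.exp s + Real.exp (-s)) =
        Real.exp (t+s) + Real.exp (t-s) + Real.exp (s-t) + Real.exp (-(t+s)) := by
      rw [add_mul, mul_add, mul_add, ← Real.exp_add, ← Real.exp_add, ← Real.exp_add, ← Real.exp_add]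
      ring_nf
    have d0 : ε * (Real.exp (t+s) + Real.exp (t-s) + Real.exp (s-t) + Real.exp (-(t+s))) ≤
        Real.exp (t+s) * A + Real.exp (t-s) * B + Real.exp (s-t) * C + Real.exp (-(t+s)) * D := by
      nlinarith [mul_le_mul_of_nonneg_left hεA (Real.exp_pos (t+s)).le,
        mul_le_mul_of_nonneg_left hεB (Real.exp_pos (t-s)).le,
        mul_le_mul_of_nonneg_left hεC (Real.exp_pos (s-t)).le,
        mul_le_mul_of_nonneg_left hεD (Real.exp_pos (-(t+s))).le]
    calc (N*ε) * Real.exp ‖((t, s) : ℝ × ℝ)‖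
        ≤ (N*ε) * ((Real.exp t + Real.exp (-t)) * (Real.exp s + Real.exp (-s))) :=
          mul_le_mul_of_nonneg_left (c1.trans c3) (by positivity)
      _ = N * (ε * (Real.exp (t+s) + Real.exp (t-s) + Real.exp (s-t) + Real.exp (-(t+s)))) := by
          rw [c4]; ring
      _ ≤ N * (Real.exp (t+s) * A + Real.exp (t-s) * B + Real.exp (s-t) * C + Real.exp (-(t+s)) * D) :=
          mul_le_mul_of_nonneg_left d0 hN.le
      _ = g (t, s) := rfl
  · intro p
    have := Real.exp_pos (p.1+p.2)
    have := Real.exp_pos (p.1-p.2)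
    have := Real.exp_pos (p.2-p.1)
    have := Real.exp_pos (-(p.1+p.2))
    positivity
  · -- unique critical point
    refine ⟨p₀, ?_, ?_⟩
    · show fderiv ℝ g p₀ = 0
      rw [(hd p₀).fderiv]
      refine ContinuousLinearMap.ext fun v => ?_
      rw [happ]
      rw [hps, hpd, hpn, ContinuousLinearMap.zero_apply]
      linear_combination (N*(v.1+v.2))*kA - (N*(v.1+v.2))*kD + (N*(v.1-v.2))*kB - (N*(v.1-v.2))*kC
    · rintro ⟨t, s⟩ hp
      have hL0 : L (t, s) = 0 := by rw [← (hd (t, s)).fderiv]; exact hp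
      have e1 : L (t, s) (1, 0) = 0 := by rw [hL0]; rfl
      have e2 : L (t, s) (0, 1) = 0 := by rw [hL0]; rfl
      rw [happ] at e1 e2
      norm_num at e1 e2
      have X1 := e1.resolve_left hNne
      have X2 := e2.resolve_left hNne
      rw [show (-s + -t) = -(t+s) by ring] at X1 X2
      have q1 : A * Real.exp (t+s) = D * Real.exp (-(t+s)) := by linarith
      have q2 : B * Real.exp (t-s) = C * Real.exp (-(t-s)) := by
        rw [show -(t-s) = s-t by ring]; linarith
      have r1 : t + s = u₀ := by
        rw [Real.exp_neg] at q1
        have hene : Real.exp (t+s) ≠ 0 := (Real.exp_pos _).ne'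
        field_simp at q1
        have h3 : Real.exp ((t+s)+(t+s)) = D / A := by
          rw [Real.exp_add, eq_div_iff hA.ne']
          linarith [q1]
        have h4 : (t+s)+(t+s) = Real.log (D/A) := by
          rw [← Real.log_exp ((t+s)+(t+s)), h3]
        rw [hu₀]; linarith
      have r2 : t - s = v₀ := by
        rw [Real.exp_neg] at q2
        have hene : Real.exp (t-s) ≠ 0 := (Real.exp_pos _).ne'
        field_simp at q2
        have h3 : Real.exp ((t-s)+(t-s)) = C / B := by
          rw [Real.exp_add, eq_div_iff hB.ne']
          linarith [q2]
        have h4 : (t-s)+(t-s) = Real.log (C/B) := by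
          rw [← Real.log_exp ((t-s)+(t-s)), h3]
        rw [hv₀]; linarith
      rw [hp₀, Prod.mk.injEq]
      constructor <;> linarith
  · constructor
    · refine ⟨p₀, ?_⟩
      show g p₀ = _
      rw [hg]
      simp only
      rw [hps, hpd, hpn]
      linear_combination N*kA + N*kB + N*kC + N*kD
    · rintro y ⟨p, rfl⟩
      have i1 : 2 * Real.sqrt (A*D) ≤ A * Real.exp (p.1+p.2) + D * Real.exp (-(p.1+p.2)) :=
        amgm_exp hA.le hD.le (p.1+p.2)
      have i2 : 2 * Real.sqrt (B*C) ≤ B * Real.exp (p.1-p.2) + C * Real.exp (-(p.1-p.2)) :=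
        amgm_exp hB.le hC.le (p.1-p.2)
      rw [show -(p.1-p.2) = p.2-p.1 by ring] at i2
      show _ ≤ g p
      have := mul_le_mul_of_nonneg_left (add_le_add i1 i2) hN.le
      rw [hg]
      simp only
      nlinarith [this]

/-- Let `a, b, a', b'` be four distinct isotropic rays with all pairwise scalar products
negative, and let `ℓ(t), ℓ'(s)` be the corresponding spacelike geodesics.  The function
`f(t,s) = -⟨ℓ(t), ℓ'(s)⟩` is proper, positive, has a unique critical point, and its global
minimum equals
`m = √(⟨a,a'⟩⟨b,b'⟩/(⟨a,b⟩⟨a',b'⟩)) + √(⟨a,b'⟩⟨b,a'⟩/(⟨a,b⟩⟨a',b'⟩))`. -/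
theorem stmt14 (n : ℕ) (a b a' b' : Fin (n + 3) → ℝ)
    (ha : bform n a a = 0) (hb : bform n b b = 0)
    (ha' : bform n a' a' = 0) (hb' : bform n b' b' = 0)
    (hab : bform n a b < 0) (hab' : bform n a' b' < 0)
    (haa' : bform n a a' < 0) (habp : bform n a b' < 0)
    (hba' : bform n b a' < 0) (hbb' : bform n b b' < 0) :
    Filter.Tendsto (fun p : ℝ × ℝ => -(bform n (lgeo n a b p.1) (lgeo n a' b' p.2)))
      (Filter.cocompact (ℝ × ℝ)) Filter.atTop ∧
    (∀ p : ℝ × ℝ, 0 < -(bform n (lgeo n a b p.1) (lgeo n a' b' p.2))) ∧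
    (∃! p : ℝ × ℝ,
      fderiv ℝ (fun q : ℝ × ℝ => -(bform n (lgeo n a b q.1) (lgeo n a' b' q.2))) p = 0) ∧
    IsLeast (Set.range (fun p : ℝ × ℝ => -(bform n (lgeo n a b p.1) (lgeo n a' b' p.2))))
      (Real.sqrt ((bform n a a' * bform n b b') / (bform n a b * bform n a' b')) +
        Real.sqrt ((bform n a b' * bform n b a') / (bform n a b * bform n a' b'))) := by
  set A : ℝ := -(bform n a a') with hA'
  set B : ℝ := -(bform n a b') with hB'
  set C : ℝ := -(bform n b a') with hC'
  set D : ℝ := -(bform n b b') with hD'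
  set N : ℝ := (Real.sqrt (-2 * bform n a b))⁻¹ * (Real.sqrt (-2 * bform n a' b'))⁻¹ with hN'
  have hA : 0 < A := by rw [hA']; linarith
  have hB : 0 < B := by rw [hB']; linarith
  have hC : 0 < C := by rw [hC']; linarith
  have hD : 0 < D := by rw [hD']; linarith
  have hs1 : 0 < Real.sqrt (-2 * bform n a b) := Real.sqrt_pos.mpr (by linarith)
  have hs2 : 0 < Real.sqrt (-2 * bform n a' b') := Real.sqrt_pos.mpr (by linarith)
  have hN : 0 < N := by rw [hN']; positivity
  have hfun : ∀ p : ℝ × ℝ, -(bform n (lgeo n a b p.1) (lgeo n a' b' p.2)) =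
      N * (Real.exp (p.1+p.2) * A + Real.exp (p.1-p.2) * B +
        Real.exp (p.2-p.1) * C + Real.exp (-(p.1+p.2)) * D) := by
    intro p
    rw [lgeo, lgeo, smul_add, smul_add, smul_smul, smul_smul, smul_smul, smul_smul, bform_bilin]
    rw [hA', hB', hC', hD', hN']
    rw [Real.exp_add, show p.1-p.2 = p.1 + -p.2 by ring, show p.2-p.1 = p.2 + -p.1 by ring,
      show -(p.1+p.2) = -p.1 + -p.2 by ring, Real.exp_add, Real.exp_add, Real.exp_add]
    ring
  have hP : 0 < bform n a b * bform n a' b' := mul_pos_of_neg_of_neg hab hab'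
  have hsq : Real.sqrt (-2 * bform n a b) * Real.sqrt (-2 * bform n a' b') =
      2 * Real.sqrt (bform n a b * bform n a' b') := by
    rw [← Real.sqrt_mul (by linarith)]
    rw [show (-2 * bform n a b) * (-2 * bform n a' b') = 4 * (bform n a b * bform n a' b') by ring]
    rw [Real.sqrt_mul (by norm_num : (0:ℝ) ≤ 4),
      show Real.sqrt 4 = 2 by rw [show (4:ℝ) = 2^2 by norm_num, Real.sqrt_sq (by norm_num)]]
  have hNP : N = (2 * Real.sqrt (bform n a b * bform n a' b'))⁻¹ := by
    rw [hN', ← mul_inv, hsq]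
  have hsqP : 0 < Real.sqrt (bform n a b * bform n a' b') := Real.sqrt_pos.mpr hP
  have hm : Real.sqrt ((bform n a a' * bform n b b') / (bform n a b * bform n a' b')) +
      Real.sqrt ((bform n a b' * bform n b a') / (bform n a b * bform n a' b')) =
      N * (2 * Real.sqrt (A*D)) + N * (2 * Real.sqrt (B*C)) := by
    have h1 : bform n a a' * bform n b b' = A * D := by rw [hA', hD']; ring
    have h2 : bform n a b' * bform n b a' = B * C := by rw [hB', hC']; ring
    rw [h1, h2, Real.sqrt_div (by rw [hA', hD']; nlinarith),
      Real.sqrt_div (by rw [hB', hC']; nlinarith), hNP]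
    field_simp
  have hfe : (fun p : ℝ × ℝ => -(bform n (lgeo n a b p.1) (lgeo n a' b' p.2))) =
      fun p : ℝ × ℝ => N * (Real.exp (p.1+p.2) * A + Real.exp (p.1-p.2) * B +
        Real.exp (p.2-p.1) * C + Real.exp (-(p.1+p.2)) * D) := funext hfun
  obtain ⟨c1, c2, c3, c4⟩ := core A B C D N hA hB hC hD hN
  rw [hfe, hm]
  exact ⟨c1, fun p => by rw [hfun p]; exact c2 p, c3, c4⟩
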